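/- Let L be a bounded self-adjoint operator on a Hilbert space and H a unitary with H² = I such that L² commutes with H. For every u in the space and every ℓ ∈ ℕ: if (LH)^ℓ L u = 0 then L u = 0. -/
import Mathlib

open scoped InnerProductSpace in
theorem stmt_13 {E : Type*} [NormedAddCommGroup E] [InnerProductSpace ℂ E] [CompleteSpace E]
    (L H : E →L[ℂ] E) (hL : IsSelfAdjoint L)
    (hHunitary : ContinuousLinearMap.adjoint H * H = 1 ∧ H * ContinuousLinearMap.adjoint H = 1)
    (hH2 : H * H = 1) (hcomm : L ^ 2 * H = H * L ^ 2)
    (u : E) (l : ℕ) (h : ((L * H) ^ l) (L u) = 0) : L u = 0 := by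
  have hHadj : ContinuousLinearMap.adjoint H = H := by
    calc ContinuousLinearMap.adjoint H
        = ContinuousLinearMap.adjoint H * (H * H) := by rw [hH2, mul_one]
      _ = (ContinuousLinearMap.adjoint H * H) * H := by rw [mul_assoc]
      _ = H := by rw [hHunitary.1, one_mul]
  have hLadj : ContinuousLinearMap.adjoint L = L := ContinuousLinearMap.isSelfAdjoint_iff'.mp hL
  have hsymL : ∀ x y : E, ⟪L x, y⟫_ℂ = ⟪x, L y⟫_ℂ := fun x y => hL.isSymmetric x y
  have hsymH : ∀ x y : E, ⟪H x, y⟫_ℂ = ⟪x, H y⟫_ℂ := fun x y =>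
    (ContinuousLinearMap.isSelfAdjoint_iff'.mpr hHadj).isSymmetric x y
  have hconj : H * L ^ 2 * H = L ^ 2 := by
    rw [← hcomm, mul_assoc, hH2, mul_one]
  have key : ∀ v : E, L (H (L v)) = 0 → L v = 0 := by
    intro v hv
    have hL2 : L (L v) = 0 := by
      have hinner : ⟪L (L v), L (L v)⟫_ℂ = 0 := by
        have e1 : L (L (L v)) = H (L (L (H (L v)))) := by
          have := congrArg (fun T : E →L[ℂ] E => T (L v)) hconj
          simp only [ContinuousLinearMap.mul_apply, pow_two] at this
          exact this.symm
        calc ⟪L (L v), L (L v)⟫_ℂ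
            = ⟪L v, L (L (L v))⟫_ℂ := hsymL _ _
          _ = ⟪L v, H (L (L (H (L v))))⟫_ℂ := by rw [e1]
          _ = ⟪H (L v), L (L (H (L v)))⟫_ℂ := (hsymH _ _).symm
          _ = 0 := by rw [hv]; simp
      exact inner_self_eq_zero.mp hinner
    have hinner2 : ⟪L v, L v⟫_ℂ = 0 := by
      calc ⟪L v, L v⟫_ℂ = ⟪v, L (L v)⟫_ℂ := hsymL _ _
        _ = 0 := by rw [hL2]; simp
    exact inner_self_eq_zero.mp hinner2
  induction l generalizing u with
  | zero => simpa using h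
  | succ l ih =>
    rw [pow_succ] at h
    have h' : ((L * H) ^ l) (L (H (L u))) = 0 := by
      simpa [ContinuousLinearMap.mul_apply] using h
    exact key u (ih (H (L u)) h')
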